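/- Let P be a Markov kernel on X with π stationary. Let μ be a probability measure with μ ≪ π and dμ/dπ ∈ L²(π), and let f, g ∈ L⁴(π). Then for all natural numbers t, s, the path covariance admits the exact decomposition: Cov_μ(f(X_t), g(X_{t+s})) = ⟨f₀, Fˢ g₀⟩_{L²(π)} + ⟨dμ/dπ − 1, Fᵗ(f₀ · (Fˢ g₀))⟩_{L²(π)} − (μPᵗf − πf)(μP^{t+s}g − πg), where f₀ := f − πf, g₀ := g − πg, and F is the forward operator (Fh)(x) := ∫ h(y) P(x,dy). -/

import Mathlib

open MeasureTheory ProbabilityTheory Filter ENNReal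

set_option linter.unusedSectionVars false

variable {X : Type*} [MeasurableSpace X]

/-- The real-valued Radon–Nikodym density of `μ` with respect to `π`. -/
noncomputable def rnd (π μ : Measure X) (x : X) : ℝ := (μ.rnDeriv π x).toReal

/-- `n`-fold action of the kernel `P` on the measure `μ`, i.e. `μPⁿ`. -/
noncomputable def mIter (P : Kernel X X) (n : ℕ) (μ : Measure X) : Measure X :=
  (fun ν => ν.bind (fun x => P x))^[n] μ

/-- `n`-fold composition of the kernel `P`, i.e. `Pⁿ`. -/
noncomputable def kpow (P : Kernel X X) : ℕ → Kernel X X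
  | 0 => Kernel.id
  | n + 1 => (kpow P n).comp P

/-- `‖μ − ν‖₂`, the `L²(π)` distance between the `π`-densities of `μ` and `ν`. -/
noncomputable def d2 (π μ ν : Measure X) : ℝ :=
  (eLpNorm (fun x => rnd π μ x - rnd π ν x) 2 π).toReal

/-- `‖μ − ν‖₁`, the `L¹(π)` distance between the `π`-densities of `μ` and `ν`. -/
noncomputable def d1 (π μ ν : Measure X) : ℝ := ∫ x, |rnd π μ x - rnd π ν x| ∂π

/-- `P` acts on `L²(π)` through the bounded linear operator `T`:
for every probability measure `μ ≪ π` with `dμ/dπ ∈ L²(π)`,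
`T(dμ/dπ)` is a version of `d(μP)/dπ`. -/
def ActsOn (π : Measure X) (P : Kernel X X) (T : Lp ℝ 2 π →L[ℝ] Lp ℝ 2 π) : Prop :=
  ∀ μ : Measure X, IsProbabilityMeasure μ → μ ≪ π →
    ∀ h : MemLp (rnd π μ) 2 π,
      ⇑(T (h.toLp (rnd π μ))) =ᵐ[π] rnd π (μ.bind (fun x => P x))

/-- `L²(π)`-geometric ergodicity with rate `1 − α`:
`T` contracts mean-zero functions by the factor `1 − α`. -/
def IsGeomErg (π : Measure X) (T : Lp ℝ 2 π →L[ℝ] Lp ℝ 2 π) (α : ℝ) : Prop :=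
  ∀ f : Lp ℝ 2 π, ∫ x, f x ∂π = 0 → ‖T f‖ ≤ (1 - α) * ‖f‖

/-- Reversibility of `P` with respect to `π`. -/
def Reversible (π : Measure X) (P : Kernel X X) : Prop :=
  ∀ A B : Set X, MeasurableSet A → MeasurableSet B →
    ∫⁻ x in A, P x B ∂π = ∫⁻ x in B, P x A ∂π

/-- `∫ h dPᵏ(x,·)`, the `k`-step forward operator applied to `h`. -/
noncomputable def kInt (P : Kernel X X) (k : ℕ) (h : X → ℝ) (x : X) : ℝ :=
  ∫ y, h y ∂(kpow P k x)

/-- `μPᵏh = ∫∫ h(y) Pᵏ(x,dy) μ(dx)`. -/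
noncomputable def mkInt (P : Kernel X X) (μ : Measure X) (k : ℕ) (h : X → ℝ) : ℝ :=
  ∫ x, kInt P k h x ∂μ

/-- Path covariance `Cov_μ(f(X_t), g(X_{t+s}))` of the chain with kernel `P` started at `μ`. -/
noncomputable def covPath (P : Kernel X X) (μ : Measure X) (t s : ℕ) (f g : X → ℝ) : ℝ :=
  ∫ x, (∫ y, (∫ z, (f y - mkInt P μ t f) * (g z - mkInt P μ (t + s) g)
    ∂(kpow P s y)) ∂(kpow P t x)) ∂μ

/-- Path covariance `Cov_μ(f(X_m), g(X_n))` of the chain with kernel `P` started at `μ`. -/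
noncomputable def covPath2 (P : Kernel X X) (μ : Measure X) (m n : ℕ) (f g : X → ℝ) : ℝ :=
  ∫ x, (∫ y, (∫ z, (f y - mkInt P μ (min m n) f) * (g z - mkInt P μ (max m n) g)
    ∂(kpow P (max m n - min m n) y)) ∂(kpow P (min m n) x)) ∂μ

section helper

variable {P : Kernel X X} [IsMarkovKernel P]

instance kpow_markov (P : Kernel X X) [IsMarkovKernel P] (n : ℕ) :
    IsMarkovKernel (kpow P n) := by
  induction n with
  | zero => rw [kpow]; infer_instance
  | succ n ih => rw [kpow]; infer_instance

variable {π : Measure X} [IsProbabilityMeasure π]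

lemma kpow_comm (P : Kernel X X) [IsMarkovKernel P] (n : ℕ) :
    (kpow P n).comp P = P.comp (kpow P n) := by
  induction n with
  | zero => rw [kpow, Kernel.id_comp, Kernel.comp_id]
  | succ n ih =>
      rw [kpow, ← Kernel.comp_assoc, ih, Kernel.comp_assoc, ih]

lemma kpow_add (P : Kernel X X) [IsMarkovKernel P] (a b : ℕ) :
    kpow P (a + b) = (kpow P b).comp (kpow P a) := by
  induction b with
  | zero => rw [Nat.add_zero, kpow, Kernel.id_comp]
  | succ b ih =>
      have h0 : a + (b + 1) = (a + b) + 1 := by ring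
      calc kpow P (a + (b + 1)) = kpow P (a + b) ∘ₖ P := by rw [h0, kpow]
        _ = (kpow P b ∘ₖ kpow P a) ∘ₖ P := by rw [ih]
        _ = kpow P b ∘ₖ (kpow P a ∘ₖ P) := by rw [Kernel.comp_assoc]
        _ = kpow P b ∘ₖ (P ∘ₖ kpow P a) := by rw [kpow_comm]
        _ = (kpow P b ∘ₖ P) ∘ₖ kpow P a := by rw [Kernel.comp_assoc]
        _ = kpow P (b + 1) ∘ₖ kpow P a := by rw [kpow]

lemma bind_kpow_stat (hstat : π.bind (fun x => P x) = π) (n : ℕ) :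
    π.bind (fun x => kpow P n x) = π := by
  induction n with
  | zero =>
      simp [kpow, Kernel.id_apply]
  | succ n ih =>
      have h1 : ∀ x, kpow P (n + 1) x = (P x).bind (fun y => kpow P n y) := by
        intro x; rw [kpow, Kernel.comp_apply]
      simp only [h1]
      rw [← Measure.bind_bind (P.measurable.aemeasurable) ((kpow P n).measurable.aemeasurable), hstat, ih]

/-- transfer of a.e. properties along the chain -/
lemma ae_ae_kpow (hstat : π.bind (fun x => P x) = π) {p : X → Prop}
    (hp : ∀ᵐ y ∂π, p y) (n : ℕ) :
    ∀ᵐ x ∂π, ∀ᵐ y ∂(kpow P n x), p y := by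
  set N := toMeasurable π {y | ¬ p y} with hN
  have hNm : MeasurableSet N := measurableSet_toMeasurable _ _
  have hN0 : π N = 0 := by
    rw [hN, measure_toMeasurable]
    exact hp
  have hzero : ∫⁻ x, kpow P n x N ∂π = 0 := by
    rw [← Measure.bind_apply hNm ((kpow P n).measurable.aemeasurable), bind_kpow_stat hstat n, hN0]
  have h2 : ∀ᵐ x ∂π, kpow P n x N = 0 := by
    have hme : Measurable fun x => kpow P n x N := Kernel.measurable_coe _ hNm
    rw [lintegral_eq_zero_iff hme] at hzero
    exact hzero
  filter_upwards [h2] with x hx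
  rw [ae_iff]
  exact measure_mono_null (subset_toMeasurable _ _) hx

lemma kInt_sm {h : X → ℝ} (hm : StronglyMeasurable h) (k : ℕ) :
    StronglyMeasurable (kInt P k h) := by
  have : StronglyMeasurable (fun q : X × X => h q.2) :=
    hm.comp_measurable measurable_snd
  exact this.integral_kernel_prod_right' (κ := kpow P k)

/-- Jensen for lintegrals against probability measures -/
lemma lint_pow_le {κ : Measure X} [IsProbabilityMeasure κ] {u : X → ℝ≥0∞}
    (hu : AEMeasurable u κ) {p : ℝ} (hp : 1 < p) :
    (∫⁻ y, u y ∂κ) ^ p ≤ ∫⁻ y, u y ^ p ∂κ := by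
  have hp0 : (0:ℝ) < p := lt_trans one_pos hp
  have hq : p.HolderConjugate (p / (p - 1)) := Real.HolderConjugate.conjExponent hp
  have h1 : ∫⁻ y, u y ∂κ ≤ (∫⁻ y, u y ^ p ∂κ) ^ (1 / p) := by
    have := ENNReal.lintegral_mul_le_Lp_mul_Lq κ hq hu
      (aemeasurable_const (b := (1:ℝ≥0∞)))
    simp only [Pi.mul_apply, mul_one, ENNReal.one_rpow, lintegral_one,
      measure_univ, ENNReal.one_rpow, mul_one] at this
    simpa using this
  calc (∫⁻ y, u y ∂κ) ^ p ≤ ((∫⁻ y, u y ^ p ∂κ) ^ (1 / p)) ^ p :=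
        ENNReal.rpow_le_rpow h1 (le_of_lt hp0)
    _ = ∫⁻ y, u y ^ p ∂κ := by
        rw [← ENNReal.rpow_mul, one_div, inv_mul_cancel₀ (ne_of_gt hp0), ENNReal.rpow_one]

lemma lint_kInt_le (hstat : π.bind (fun x => P x) = π) {h : X → ℝ}
    (hm : Measurable h) (k : ℕ) {p : ℝ} (hp : 1 < p) :
    ∫⁻ x, (‖kInt P k h x‖₊ : ℝ≥0∞) ^ p ∂π ≤ ∫⁻ x, (‖h x‖₊ : ℝ≥0∞) ^ p ∂π := by
  have hum : Measurable fun y => (‖h y‖₊ : ℝ≥0∞) := hm.nnnorm.coe_nnreal_ennreal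
  have step1 : ∀ x, (‖kInt P k h x‖₊ : ℝ≥0∞) ^ p ≤ ∫⁻ y, (‖h y‖₊ : ℝ≥0∞) ^ p ∂(kpow P k x) := by
    intro x
    have h1 : (‖kInt P k h x‖₊ : ℝ≥0∞) ≤ ∫⁻ y, (‖h y‖₊ : ℝ≥0∞) ∂(kpow P k x) :=
      enorm_integral_le_lintegral_enorm _
    calc (‖kInt P k h x‖₊ : ℝ≥0∞) ^ p ≤ (∫⁻ y, (‖h y‖₊ : ℝ≥0∞) ∂(kpow P k x)) ^ p :=
          ENNReal.rpow_le_rpow h1 (le_of_lt (lt_trans one_pos hp))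
      _ ≤ ∫⁻ y, (‖h y‖₊ : ℝ≥0∞) ^ p ∂(kpow P k x) := lint_pow_le hum.aemeasurable hp
  calc ∫⁻ x, (‖kInt P k h x‖₊ : ℝ≥0∞) ^ p ∂π
      ≤ ∫⁻ x, ∫⁻ y, (‖h y‖₊ : ℝ≥0∞) ^ p ∂(kpow P k x) ∂π := lintegral_mono step1
    _ = ∫⁻ y, (‖h y‖₊ : ℝ≥0∞) ^ p ∂(π.bind (fun x => kpow P k x)) :=
        (Measure.lintegral_bind ((kpow P k).measurable.aemeasurable) (hum.pow_const p).aemeasurable).symm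
    _ = ∫⁻ y, (‖h y‖₊ : ℝ≥0∞) ^ p ∂π := by rw [bind_kpow_stat hstat k]

/-- extract finiteness of the p-lintegral from MemLp -/
lemma lint_lt_top_of_memLp {u : X → ℝ} {p : ℝ≥0∞} (hp0 : p ≠ 0) (hpt : p ≠ ∞)
    (hu : MemLp u p π) : ∫⁻ x, (‖u x‖₊ : ℝ≥0∞) ^ p.toReal ∂π < ∞ := by
  have h := hu.2
  rw [eLpNorm_eq_lintegral_rpow_enorm_toReal hp0 hpt] at h
  have hpt' : 0 < p.toReal := ENNReal.toReal_pos hp0 hpt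
  rw [← ENNReal.rpow_lt_top_iff_of_pos (by positivity : (0:ℝ) < 1 / p.toReal)]
  exact h

lemma memLp_kInt (hstat : π.bind (fun x => P x) = π) {h : X → ℝ}
    (hm : StronglyMeasurable h) {p : ℝ≥0∞} (hp : 1 < p.toReal) (hpt : p ≠ ∞)
    (hh : MemLp h p π) (k : ℕ) : MemLp (kInt P k h) p π := by
  have hp0 : p ≠ 0 := by
    intro hc; rw [hc] at hp; simp at hp; exact absurd hp (by norm_num)
  refine ⟨(kInt_sm hm k).aestronglyMeasurable, ?_⟩
  rw [eLpNorm_eq_lintegral_rpow_enorm_toReal hp0 hpt]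
  have hb := lint_kInt_le hstat hm.measurable k hp
  calc (∫⁻ x, (‖kInt P k h x‖₊ : ℝ≥0∞) ^ p.toReal ∂π) ^ (1 / p.toReal)
      ≤ (∫⁻ x, (‖h x‖₊ : ℝ≥0∞) ^ p.toReal ∂π) ^ (1 / p.toReal) :=
        ENNReal.rpow_le_rpow hb (by positivity)
    _ < ∞ := ENNReal.rpow_lt_top_of_nonneg (by positivity)
          (ne_of_lt (lint_lt_top_of_memLp hp0 hpt hh))

lemma ae_integrable_kpow (hstat : π.bind (fun x => P x) = π) {h : X → ℝ}
    (hm : StronglyMeasurable h) (hh : Integrable h π) (k : ℕ) :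
    ∀ᵐ x ∂π, Integrable h (kpow P k x) := by
  have hum : Measurable fun y => (‖h y‖₊ : ℝ≥0∞) := hm.measurable.nnnorm.coe_nnreal_ennreal
  have heq : ∫⁻ x, ∫⁻ y, (‖h y‖₊ : ℝ≥0∞) ∂(kpow P k x) ∂π = ∫⁻ y, (‖h y‖₊ : ℝ≥0∞) ∂π := by
    rw [← Measure.lintegral_bind ((kpow P k).measurable.aemeasurable) hum.aemeasurable, bind_kpow_stat hstat k]
  have hfin : ∫⁻ x, ∫⁻ y, (‖h y‖₊ : ℝ≥0∞) ∂(kpow P k x) ∂π < ∞ := by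
    rw [heq]; exact hh.2
  have := ae_lt_top (Measurable.lintegral_kernel hum) (ne_of_lt hfin)
  filter_upwards [this] with x hx
  exact ⟨hm.aestronglyMeasurable, hx⟩

/-- bind of a probability measure by a Markov kernel is a probability measure -/
lemma isProb_bind (μ : Measure X) [IsProbabilityMeasure μ] (κ : Kernel X X)
    [IsMarkovKernel κ] : IsProbabilityMeasure (μ.bind (fun x => κ x)) := by
  constructor
  rw [Measure.bind_apply MeasurableSet.univ κ.measurable.aemeasurable]
  simp

lemma bind_eq_map_snd (μ : Measure X) [SFinite μ] (κ : Kernel X X) [IsMarkovKernel κ] :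
    μ.bind (fun x => κ x) = (μ.compProd κ).map Prod.snd := by
  ext s hs
  rw [Measure.map_apply measurable_snd hs, Measure.compProd_apply (measurable_snd hs),
    Measure.bind_apply hs κ.measurable.aemeasurable]
  rfl

lemma my_integral_bind {μ : Measure X} [IsProbabilityMeasure μ] {κ : Kernel X X}
    [IsMarkovKernel κ] {h : X → ℝ} (hi : Integrable h (μ.bind (fun x => κ x))) :
    ∫ y, h y ∂(μ.bind (fun x => κ x)) = ∫ x, ∫ y, h y ∂(κ x) ∂μ := by
  have hmap := bind_eq_map_snd μ κ
  have hi' : Integrable (fun q : X × X => h q.2) (μ.compProd κ) := by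
    have := hi
    rw [hmap] at this
    exact (integrable_map_measure (hi.aestronglyMeasurable.mono_ac
      (by rw [hmap])) measurable_snd.aemeasurable).mp this
  rw [hmap, integral_map measurable_snd.aemeasurable
    (by rw [← hmap]; exact hi.aestronglyMeasurable),
    Measure.integral_compProd hi']

lemma bind_ac (hstat : π.bind (fun x => P x) = π) {μ : Measure X} (hμac : μ ≪ π) (k : ℕ) :
    μ.bind (fun x => kpow P k x) ≪ π := by
  intro N hN
  set N' := toMeasurable π N with hN'
  have hNm : MeasurableSet N' := measurableSet_toMeasurable _ _
  have hN'0 : π N' = 0 := by rw [hN', measure_toMeasurable]; exact hN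
  have hzero : ∫⁻ x, kpow P k x N' ∂π = 0 := by
    rw [← Measure.bind_apply hNm ((kpow P k).measurable.aemeasurable), bind_kpow_stat hstat k, hN'0]
  have h2 : ∀ᵐ x ∂π, kpow P k x N' = 0 := by
    rw [lintegral_eq_zero_iff (Kernel.measurable_coe _ hNm)] at hzero
    exact hzero
  have h3 : ∀ᵐ x ∂μ, kpow P k x N' = 0 := hμac.ae_le h2
  have h4 : μ.bind (fun x => kpow P k x) N' = 0 := by
    rw [Measure.bind_apply hNm ((kpow P k).measurable.aemeasurable)]
    exact (lintegral_eq_zero_iff' ((Kernel.measurable_coe _ hNm).aemeasurable)).mpr h3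
  exact measure_mono_null (subset_toMeasurable _ _) h4

lemma integrable_bind_of_L2 (hstat : π.bind (fun x => P x) = π)
    {μ : Measure X} [IsProbabilityMeasure μ] (hμac : μ ≪ π) (hμ2 : MemLp (rnd π μ) 2 π)
    {h : X → ℝ} (hm : StronglyMeasurable h) (hh : MemLp h 2 π) (k : ℕ) :
    Integrable h (μ.bind (fun x => kpow P k x)) := by
  refine ⟨hm.aestronglyMeasurable, ?_⟩
  rw [hasFiniteIntegral_def]
  have hum : Measurable fun y => (‖h y‖₊ : ℝ≥0∞) := hm.measurable.nnnorm.coe_nnreal_ennreal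
  set G : X → ℝ≥0∞ := fun x => ∫⁻ y, (‖h y‖₊ : ℝ≥0∞) ∂(kpow P k x) with hG
  have hGm : Measurable G := Measurable.lintegral_kernel hum
  have h1 : ∫⁻ y, (‖h y‖₊ : ℝ≥0∞) ∂(μ.bind (fun x => kpow P k x)) = ∫⁻ x, G x ∂μ :=
    Measure.lintegral_bind ((kpow P k).measurable.aemeasurable) hum.aemeasurable
  refine lt_of_eq_of_lt h1 ?_
  have hrm : Measurable (μ.rnDeriv π) := Measure.measurable_rnDeriv μ π
  have h2 : ∫⁻ x, G x ∂μ = ∫⁻ x, μ.rnDeriv π x * G x ∂π := by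
    conv_lhs => rw [← Measure.withDensity_rnDeriv_eq μ π hμac]
    rw [lintegral_withDensity_eq_lintegral_mul π hrm hGm]
    rfl
  rw [h2]
  have hcs := ENNReal.lintegral_mul_le_Lp_mul_Lq π (Real.HolderConjugate.conjExponent one_lt_two)
    hrm.aemeasurable hGm.aemeasurable
  have hconj : Real.conjExponent 2 = 2 := by norm_num [Real.conjExponent]
  rw [hconj] at hcs
  have hr2 : ∫⁻ x, μ.rnDeriv π x ^ (2:ℝ) ∂π < ∞ := by
    have hae : ∀ᵐ x ∂π, μ.rnDeriv π x ^ (2:ℝ) = (‖rnd π μ x‖₊ : ℝ≥0∞) ^ (2:ℝ) := by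
      filter_upwards [Measure.rnDeriv_lt_top μ π] with x hx
      congr 1
      rw [rnd]
      rw [← ENNReal.coe_toNNReal (ne_of_lt hx)]
      congr 1
      ext
      simp [Real.nnnorm_of_nonneg ENNReal.toReal_nonneg]
    rw [lintegral_congr_ae hae]
    have := lint_lt_top_of_memLp (two_ne_zero) (ENNReal.ofNat_ne_top) hμ2
    simpa using this
  have hG2 : ∫⁻ x, G x ^ (2:ℝ) ∂π < ∞ := by
    have hpt : ∀ x, G x ^ (2:ℝ) ≤ ∫⁻ y, (‖h y‖₊ : ℝ≥0∞) ^ (2:ℝ) ∂(kpow P k x) := by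
      intro x
      exact lint_pow_le hum.aemeasurable one_lt_two
    calc ∫⁻ x, G x ^ (2:ℝ) ∂π
        ≤ ∫⁻ x, ∫⁻ y, (‖h y‖₊ : ℝ≥0∞) ^ (2:ℝ) ∂(kpow P k x) ∂π := lintegral_mono hpt
      _ = ∫⁻ y, (‖h y‖₊ : ℝ≥0∞) ^ (2:ℝ) ∂(π.bind (fun x => kpow P k x)) :=
          (Measure.lintegral_bind ((kpow P k).measurable.aemeasurable) (hum.pow_const _).aemeasurable).symm
      _ = ∫⁻ y, (‖h y‖₊ : ℝ≥0∞) ^ (2:ℝ) ∂π := by rw [bind_kpow_stat hstat k]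
      _ < ∞ := by
          have := lint_lt_top_of_memLp (two_ne_zero) (ENNReal.ofNat_ne_top) hh
          simpa using this
  calc ∫⁻ x, μ.rnDeriv π x * G x ∂π
      ≤ (∫⁻ x, μ.rnDeriv π x ^ (2:ℝ) ∂π) ^ (1/(2:ℝ))
        * (∫⁻ x, G x ^ (2:ℝ) ∂π) ^ (1/(2:ℝ)) := hcs
    _ < ∞ := ENNReal.mul_lt_top
        (ENNReal.rpow_lt_top_of_nonneg (by norm_num) (ne_of_lt hr2))
        (ENNReal.rpow_lt_top_of_nonneg (by norm_num) (ne_of_lt hG2))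

end helper

/-- Exact decomposition of the path covariance `Cov_μ(f(X_t), g(X_{t+s}))` in terms of
the forward operator `F`. -/
theorem stmt19 (π : Measure X) [IsProbabilityMeasure π] (P : Kernel X X) [IsMarkovKernel P]
    (hstat : π.bind (fun x => P x) = π)
    (μ : Measure X) [IsProbabilityMeasure μ] (hμac : μ ≪ π) (hμ2 : MemLp (rnd π μ) 2 π)
    (f g : X → ℝ) (hf : MemLp f 4 π) (hg : MemLp g 4 π) (t s : ℕ) :
    covPath P μ t s f g
      = (∫ x, (f x - ∫ y, f y ∂π)
            * kInt P s (fun y => g y - ∫ y', g y' ∂π) x ∂π)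
        + (∫ x, (rnd π μ x - 1)
            * kInt P t (fun y => (f y - ∫ y', f y' ∂π)
                * kInt P s (fun w => g w - ∫ y', g y' ∂π) y) x ∂π)
        - (mkInt P μ t f - ∫ x, f x ∂π) * (mkInt P μ (t + s) g - ∫ x, g x ∂π) := by
  -- abbreviations
  set If := ∫ y, f y ∂π with hIf
  set Ig := ∫ y', g y' ∂π with hIg
  set a := mkInt P μ t f with ha
  set b := mkInt P μ (t + s) g with hb
  -- measurable versions
  set f' := hf.aestronglyMeasurable.mk f with hf'def
  have hf'sm : StronglyMeasurable f' := hf.aestronglyMeasurable.stronglyMeasurable_mk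
  have hff' : f =ᵐ[π] f' := hf.aestronglyMeasurable.ae_eq_mk
  set g' := hg.aestronglyMeasurable.mk g with hg'def
  have hg'sm : StronglyMeasurable g' := hg.aestronglyMeasurable.stronglyMeasurable_mk
  have hgg' : g =ᵐ[π] g' := hg.aestronglyMeasurable.ae_eq_mk
  have hf'4 : MemLp f' 4 π := hf.ae_eq hff'
  have hg'4 : MemLp g' 4 π := hg.ae_eq hgg'
  have h4top : (4 : ℝ≥0∞) ≠ ∞ := by simp
  have h4toReal : (1:ℝ) < (4 : ℝ≥0∞).toReal := by
    rw [ENNReal.toReal_ofNat]; norm_num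
  have h24 : (2 : ℝ≥0∞) ≤ 4 := by norm_num
  have h14 : (1 : ℝ≥0∞) ≤ 4 := by norm_num
  -- the forward image of g'
  set K := kInt P s g' with hK
  have hKsm : StronglyMeasurable K := kInt_sm hg'sm s
  have hK4 : MemLp K 4 π := memLp_kInt hstat hg'sm h4toReal h4top hg'4 s
  -- main auxiliary functions
  set W : X → ℝ := fun y => (f y - If) * kInt P s (fun w => g w - Ig) y with hW
  set W' : X → ℝ := fun y => (f' y - If) * (K y - Ig) with hW'
  set H' : X → ℝ := fun y => (f' y - a) * (K y - b) with hH'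
  have hW'sm : StronglyMeasurable W' :=
    (hf'sm.sub stronglyMeasurable_const).mul (hKsm.sub stronglyMeasurable_const)
  have hH'sm : StronglyMeasurable H' :=
    (hf'sm.sub stronglyMeasurable_const).mul (hKsm.sub stronglyMeasurable_const)
  have hfIf4 : MemLp (fun y => f' y - If) 4 π := hf'4.sub (memLp_const If)
  have hfa4 : MemLp (fun y => f' y - a) 4 π := hf'4.sub (memLp_const a)
  have hKIg4 : MemLp (fun y => K y - Ig) 4 π := hK4.sub (memLp_const Ig)
  have hKb4 : MemLp (fun y => K y - b) 4 π := hK4.sub (memLp_const b)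
  have hhalf : (1:ℝ≥0∞)/2 = 1/4 + 1/4 := by
    rw [ENNReal.div_add_div_same, one_add_one_eq_two]
    exact (ENNReal.div_eq_div_iff (by norm_num) (by norm_num) (by norm_num) (by norm_num)).mpr
      (by norm_num)
  have hW'2 : MemLp W' 2 π := hKIg4.smul hfIf4 (hpqr := ⟨by simpa [one_div] using hhalf.symm⟩)
  have hH'2 : MemLp H' 2 π := hKb4.smul hfa4 (hpqr := ⟨by simpa [one_div] using hhalf.symm⟩)
  -- mean-zero free facts about ν
  set ν := μ.bind (fun x => kpow P t x) with hν
  set ν2 := μ.bind (fun x => kpow P (t + s) x) with hν2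
  haveI : IsProbabilityMeasure ν := isProb_bind μ _
  haveI : IsProbabilityMeasure ν2 := isProb_bind μ _
  have hν2eq : ν.bind (fun x => kpow P s x) = ν2 := by
    rw [hν, Measure.bind_bind ((kpow P t).measurable.aemeasurable) ((kpow P s).measurable.aemeasurable), hν2]
    congr 1
    funext x
    rw [kpow_add P t s, Kernel.comp_apply]
  -- integrability with respect to ν
  have hW'ν : Integrable W' ν := integrable_bind_of_L2 hstat hμac hμ2 hW'sm
    (hW'2) t
  have hH'ν : Integrable H' ν := integrable_bind_of_L2 hstat hμac hμ2 hH'sm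
    (hH'2) t
  have hf'ν : Integrable f' ν := integrable_bind_of_L2 hstat hμac hμ2 hf'sm
    (hf'4.mono_exponent h24) t
  have hKν : Integrable K ν := integrable_bind_of_L2 hstat hμac hμ2 hKsm
    (hK4.mono_exponent h24) t
  have hg'ν2 : Integrable g' ν2 := integrable_bind_of_L2 hstat hμac hμ2 hg'sm
    (hg'4.mono_exponent h24) (t + s)
  -- a.e. congruence facts
  have hg'int : Integrable g' π := (hg'4.mono_exponent h14).integrable le_rfl
  have hkg_b : ∀ᵐ y ∂π, kInt P s (fun z => g z - b) y = K y - b := by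
    filter_upwards [ae_ae_kpow hstat hgg' s, ae_integrable_kpow hstat hg'sm hg'int s]
      with y h1 h2
    rw [kInt]
    rw [integral_congr_ae (g := fun z => g' z - b) (h1.mono fun z hz => by rw [hz])]
    rw [integral_sub h2 (integrable_const b)]
    simp [hK, kInt]
  have hkg_Ig : ∀ᵐ y ∂π, kInt P s (fun z => g z - Ig) y = K y - Ig := by
    filter_upwards [ae_ae_kpow hstat hgg' s, ae_integrable_kpow hstat hg'sm hg'int s]
      with y h1 h2
    rw [kInt]
    rw [integral_congr_ae (g := fun z => g' z - Ig) (h1.mono fun z hz => by rw [hz])]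
    rw [integral_sub h2 (integrable_const Ig)]
    simp [hK, kInt]
  have hWW' : W =ᵐ[π] W' := by
    filter_upwards [hff', hkg_Ig] with y h1 h2
    rw [hW, hW']
    dsimp only
    rw [h1, h2]
  have hHae : ∀ᵐ y ∂π, (f y - a) * kInt P s (fun z => g z - b) y = H' y := by
    filter_upwards [hff', hkg_b] with y h1 h2
    rw [hH']
    dsimp only
    rw [h1, h2]
  -- Step 1: compute covPath = ∫ H' dν
  have step1 : covPath P μ t s f g
      = ∫ x, (∫ y, (f y - a) * kInt P s (fun z => g z - b) y ∂(kpow P t x)) ∂μ := by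
    rw [covPath, ← ha, ← hb]
    congr 1
    funext x
    congr 1
    funext y
    rw [integral_const_mul]
    rfl
  have step2 : covPath P μ t s f g = ∫ y, H' y ∂ν := by
    rw [step1]
    have hae2 : ∀ᵐ x ∂μ, ∫ y, (f y - a) * kInt P s (fun z => g z - b) y ∂(kpow P t x)
        = ∫ y, H' y ∂(kpow P t x) := by
      filter_upwards [hμac.ae_le (ae_ae_kpow hstat hHae t)] with x hx
      exact integral_congr_ae hx
    rw [integral_congr_ae hae2, ← my_integral_bind hH'ν]
  -- identify a and b as ν/ν2 integrals
  have hint_a : a = ∫ y, f' y ∂ν := by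
    have h1 : ∀ᵐ x ∂μ, kInt P t f x = ∫ y, f' y ∂(kpow P t x) := by
      filter_upwards [hμac.ae_le (ae_ae_kpow hstat hff' t)] with x hx
      exact integral_congr_ae hx
    rw [ha, mkInt, integral_congr_ae h1, ← my_integral_bind hf'ν]
  have hint_b : b = ∫ y, g' y ∂ν2 := by
    have h1 : ∀ᵐ x ∂μ, kInt P (t + s) g x = ∫ y, g' y ∂(kpow P (t + s) x) := by
      filter_upwards [hμac.ae_le (ae_ae_kpow hstat hgg' (t + s))] with x hx
      exact integral_congr_ae hx
    rw [hb, mkInt, integral_congr_ae h1, ← my_integral_bind hg'ν2]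
  have hint_K : ∫ y, K y ∂ν = ∫ y, g' y ∂ν2 := by
    have h2 : Integrable g' (ν.bind (fun x => kpow P s x)) := by
      rw [hν2eq]; exact hg'ν2
    have h3 := my_integral_bind h2
    rw [hν2eq] at h3
    rw [h3, hK]
    simp only [kInt]
  -- Step 3: expand ∫ H' dν
  have hexp : ∀ y, H' y = W' y + ((Ig - b) * (f' y - If)
      + ((If - a) * (K y - Ig) + (If - a) * (Ig - b))) := by
    intro y
    rw [hH', hW']
    dsimp only
    ring
  have hfIfν : Integrable (fun y => f' y - If) ν := hf'ν.sub (integrable_const If)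
  have hKIgν : Integrable (fun y => K y - Ig) ν := hKν.sub (integrable_const Ig)
  have step3 : ∫ y, H' y ∂ν
      = ∫ y, W' y ∂ν + ((Ig - b) * (a - If) + ((If - a) * (b - Ig) + (If - a) * (Ig - b))) := by
    rw [integral_congr_ae (Eventually.of_forall hexp)]
    have hc1 : Integrable (fun y => (Ig - b) * (f' y - If)) ν := hfIfν.const_mul (Ig - b)
    have hc2 : Integrable (fun y => (If - a) * (K y - Ig)) ν := hKIgν.const_mul (If - a)
    have hc3 : Integrable (fun _ : X => (If - a) * (Ig - b)) ν :=
      integrable_const ((If - a) * (Ig - b))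
    have hR2 : Integrable (fun y => (If - a) * (K y - Ig) + (If - a) * (Ig - b)) ν := hc2.add hc3
    have hR1 : Integrable (fun y => (Ig - b) * (f' y - If)
        + ((If - a) * (K y - Ig) + (If - a) * (Ig - b))) ν := hc1.add hR2
    rw [integral_add hW'ν hR1, integral_add hc1 hR2, integral_add hc2 hc3]
    rw [integral_const_mul, integral_const_mul, integral_const]
    rw [integral_sub hf'ν (integrable_const If), integral_sub hKν (integrable_const Ig)]
    rw [integral_const, integral_const]
    simp only [measure_univ, probReal_univ, ENNReal.toReal_one, one_smul, smul_eq_mul, one_mul]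
    rw [← hint_a, hint_K, ← hint_b]
  -- Step 4: the first term on the RHS
  have term1 : ∫ x, (f x - If) * kInt P s (fun y => g y - Ig) x ∂π = ∫ y, W' y ∂π :=
    integral_congr_ae hWW'
  -- Step 5: the second term on the RHS
  set K2 := kInt P t W' with hK2
  have hK2L2 : MemLp K2 2 π := memLp_kInt hstat hW'sm
    (by rw [ENNReal.toReal_ofNat]; norm_num) ENNReal.ofNat_ne_top hW'2 t
  have hrndK2 : Integrable (fun x => rnd π μ x * K2 x) π := by
    have hone : (1:ℝ≥0∞)/1 = 1/2 + 1/2 := by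
      rw [ENNReal.div_add_div_same, one_add_one_eq_two, div_one,
        ENNReal.div_self (by norm_num) (by norm_num)]
    have := hK2L2.smul hμ2 (r := 1) (hpqr := ⟨by simpa [one_div] using hone.symm⟩)
    exact memLp_one_iff_integrable.mp this
  have hK2int : Integrable K2 π := hK2L2.integrable one_le_two
  have hkW : kInt P t W =ᵐ[π] K2 := by
    filter_upwards [ae_ae_kpow hstat hWW' t] with x hx
    exact integral_congr_ae hx
  have term2 : ∫ x, (rnd π μ x - 1) * kInt P t W x ∂π = ∫ y, W' y ∂ν - ∫ y, W' y ∂π := by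
    have h1 : ∫ x, (rnd π μ x - 1) * kInt P t W x ∂π
        = ∫ x, (rnd π μ x * K2 x - K2 x) ∂π := by
      apply integral_congr_ae
      filter_upwards [hkW] with x hx
      rw [hx]; ring
    have hsplit : ∫ x, (rnd π μ x * K2 x - K2 x) ∂π
        = ∫ x, rnd π μ x * K2 x ∂π - ∫ x, K2 x ∂π := integral_sub hrndK2 hK2int
    rw [h1, hsplit]
    have h2 : ∫ x, rnd π μ x * K2 x ∂π = ∫ x, K2 x ∂μ := by
      have := integral_rnDeriv_smul (f := K2) hμac
      simpa [rnd, smul_eq_mul] using this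
    have h3 : ∫ x, K2 x ∂μ = ∫ y, W' y ∂ν := by
      rw [my_integral_bind hW'ν, hK2]
      simp only [kInt]
    have h4 : ∫ x, K2 x ∂π = ∫ y, W' y ∂π := by
      have h5 : Integrable W' (π.bind (fun x => kpow P t x)) := by
        rw [bind_kpow_stat hstat t]
        exact hW'2.integrable one_le_two
      have h6 := my_integral_bind h5
      rw [bind_kpow_stat hstat t] at h6
      rw [h6, hK2]
      simp only [kInt]
    rw [h2, h3, h4]
  rw [step2, step3, term1, term2]
  ring
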